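/- arXiv:0710.2033 — 3 statements merged into one kernel-verified Lean document; each statement's English description precedes it below -/
import Mathlib

section
/- Let φ and ψ be integrable functions on an interval (a,b) such that φ is decreasing and 0 ≤ ψ ≤ 1 on (a,b). Set γ = ∫_a^b ψ(t) dt. Then ∫_{b-γ}^b φ(t) dt ≤ ∫_a^b φ(t)ψ(t) dt ≤ ∫_a^{a+γ} φ(t) dt. -/
open MeasureTheory intervalIntegral Set

lemma steff_aeIoo {a b : ℝ} {p : ℝ → Prop} (h : ∀ t ∈ Ioo a b, p t) :
    ∀ᵐ t ∂(volume.restrict (Icc a b)), p t := by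
  rw [Measure.restrict_congr_set Ioo_ae_eq_Icc.symm]
  exact ae_restrict_of_forall_mem measurableSet_Ioo h

lemma steff_sub {f : ℝ → ℝ} {a b c d : ℝ} (h : IntervalIntegrable f volume a b)
    (h1 : a ≤ c) (h2 : c ≤ d) (h3 : d ≤ b) : IntervalIntegrable f volume c d :=
  h.mono_set (by
    rw [uIcc_of_le h2, uIcc_of_le (h1.trans (h2.trans h3))]
    exact Icc_subset_Icc h1 h3)

/-- Steffensen's inequality: if `φ` is decreasing and `0 ≤ ψ ≤ 1` are integrable on `(a,b)`,
and `γ = ∫_a^b ψ`, then `∫_{b-γ}^b φ ≤ ∫_a^b φψ ≤ ∫_a^{a+γ} φ`. -/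
theorem steffensen_inequality (a b : ℝ) (hab : a ≤ b) (φ ψ : ℝ → ℝ)
    (hφ : IntervalIntegrable φ volume a b)
    (hψ : IntervalIntegrable ψ volume a b)
    (hφψ : IntervalIntegrable (fun t => φ t * ψ t) volume a b)
    (hmono : AntitoneOn φ (Icc a b))
    (hψ01 : ∀ t ∈ Ioo a b, ψ t ∈ Icc (0 : ℝ) 1)
    (γ : ℝ) (hγ : γ = ∫ t in a..b, ψ t) :
    (∫ t in (b - γ)..b, φ t) ≤ (∫ t in a..b, φ t * ψ t) ∧
      (∫ t in a..b, φ t * ψ t) ≤ ∫ t in a..(a + γ), φ t := by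
  have hγ0 : 0 ≤ γ := by
    rw [hγ]
    exact intervalIntegral.integral_nonneg_of_ae_restrict hab
      (steff_aeIoo fun t ht => (hψ01 t ht).1)
  have hγb : γ ≤ b - a := by
    have h1 : (∫ t in a..b, ψ t) ≤ ∫ t in a..b, (1 : ℝ) :=
      intervalIntegral.integral_mono_ae_restrict hab hψ intervalIntegrable_const
        (steff_aeIoo fun t ht => (hψ01 t ht).2)
    rw [hγ]
    simpa using h1
  -- integrability of φ * (1 - ψ) on a..b
  have hφ1ψ : IntervalIntegrable (fun t => φ t * (1 - ψ t)) volume a b := by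
    have : (fun t => φ t * (1 - ψ t)) = fun t => φ t - φ t * ψ t := by funext t; ring
    rw [this]; exact hφ.sub hφψ
  constructor
  · -- lower bound, with d = b - γ
    set d := b - γ with hd
    have had : a ≤ d := by simp only [hd]; linarith
    have hdb : d ≤ b := by simp only [hd]; linarith
    have hψ1 : IntervalIntegrable ψ volume a d := steff_sub hψ le_rfl had hdb
    have hψ2 : IntervalIntegrable ψ volume d b := steff_sub hψ had hdb le_rfl
    have hφψ1 : IntervalIntegrable (fun t => φ t * ψ t) volume a d :=
      steff_sub hφψ le_rfl had hdb
    have hφψ2 : IntervalIntegrable (fun t => φ t * ψ t) volume d b :=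
      steff_sub hφψ had hdb le_rfl
    have hφ1ψ2 : IntervalIntegrable (fun t => φ t * (1 - ψ t)) volume d b :=
      steff_sub hφ1ψ had hdb le_rfl
    -- ∫_d^b ψ + ∫_a^d ψ = γ
    have hsum : (∫ t in a..d, ψ t) + (∫ t in d..b, ψ t) = γ := by
      rw [hγ]; exact integral_add_adjacent_intervals hψ1 hψ2
    -- ∫_d^b (1-ψ) = ∫_a^d ψ
    have e3 : (∫ t in d..b, (1 - ψ t)) = ∫ t in a..d, ψ t := by
      rw [intervalIntegral.integral_sub intervalIntegrable_const hψ2]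
      simp only [intervalIntegral.integral_const, smul_eq_mul, mul_one, hd]
      linarith
    have key : (∫ t in d..b, φ t * (1 - ψ t)) ≤ ∫ t in a..d, φ t * ψ t := by
      have e1 : (∫ t in d..b, φ t * (1 - ψ t)) ≤ ∫ t in d..b, φ d * (1 - ψ t) := by
        refine intervalIntegral.integral_mono_ae_restrict hdb hφ1ψ2
          ((intervalIntegrable_const.sub hψ2).const_mul _)
          (steff_aeIoo fun t ht => ?_)
        have htab : t ∈ Ioo a b := ⟨lt_of_le_of_lt had ht.1, ht.2⟩
        have h1 : φ t ≤ φ d :=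
          hmono ⟨had, hdb⟩ ⟨htab.1.le, htab.2.le⟩ ht.1.le
        have h2 : 0 ≤ 1 - ψ t := by linarith [(hψ01 t htab).2]
        exact mul_le_mul_of_nonneg_right h1 h2
      have e2 : (∫ t in d..b, φ d * (1 - ψ t)) = φ d * ∫ t in d..b, (1 - ψ t) :=
        intervalIntegral.integral_const_mul _ _
      have e4 : φ d * (∫ t in a..d, ψ t) = ∫ t in a..d, φ d * ψ t :=
        (intervalIntegral.integral_const_mul _ _).symm
      have e5 : (∫ t in a..d, φ d * ψ t) ≤ ∫ t in a..d, φ t * ψ t := by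
        refine intervalIntegral.integral_mono_ae_restrict had (hψ1.const_mul _) hφψ1
          (steff_aeIoo fun t ht => ?_)
        have htab : t ∈ Ioo a b := ⟨ht.1, lt_of_lt_of_le ht.2 hdb⟩
        have h1 : φ d ≤ φ t :=
          hmono ⟨htab.1.le, htab.2.le⟩ ⟨had, hdb⟩ ht.2.le
        exact mul_le_mul_of_nonneg_right h1 (hψ01 t htab).1
      calc (∫ t in d..b, φ t * (1 - ψ t)) ≤ φ d * ∫ t in d..b, (1 - ψ t) := by
              rw [← e2]; exact e1
        _ = ∫ t in a..d, φ d * ψ t := by rw [e3]; exact e4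
        _ ≤ ∫ t in a..d, φ t * ψ t := e5
    have split1 : (∫ t in a..b, φ t * ψ t)
        = (∫ t in a..d, φ t * ψ t) + ∫ t in d..b, φ t * ψ t :=
      (integral_add_adjacent_intervals hφψ1 hφψ2).symm
    have split2 : (∫ t in d..b, φ t)
        = (∫ t in d..b, φ t * ψ t) + ∫ t in d..b, φ t * (1 - ψ t) := by
      rw [← intervalIntegral.integral_add hφψ2 hφ1ψ2]
      congr 1; funext t; ring
    linarith
  · -- upper bound, with c = a + γ
    set c := a + γ with hc
    have hac : a ≤ c := by simp only [hc]; linarith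
    have hcb : c ≤ b := by simp only [hc]; linarith
    have hψ1 : IntervalIntegrable ψ volume a c := steff_sub hψ le_rfl hac hcb
    have hψ2 : IntervalIntegrable ψ volume c b := steff_sub hψ hac hcb le_rfl
    have hφψ1 : IntervalIntegrable (fun t => φ t * ψ t) volume a c :=
      steff_sub hφψ le_rfl hac hcb
    have hφψ2 : IntervalIntegrable (fun t => φ t * ψ t) volume c b :=
      steff_sub hφψ hac hcb le_rfl
    have hφ1ψ1 : IntervalIntegrable (fun t => φ t * (1 - ψ t)) volume a c :=
      steff_sub hφ1ψ le_rfl hac hcb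
    have hsum : (∫ t in a..c, ψ t) + (∫ t in c..b, ψ t) = γ := by
      rw [hγ]; exact integral_add_adjacent_intervals hψ1 hψ2
    -- ∫_a^c (1-ψ) = ∫_c^b ψ
    have e3 : (∫ t in a..c, (1 - ψ t)) = ∫ t in c..b, ψ t := by
      rw [intervalIntegral.integral_sub intervalIntegrable_const hψ1]
      simp only [intervalIntegral.integral_const, smul_eq_mul, mul_one, hc]
      linarith
    have key : (∫ t in c..b, φ t * ψ t) ≤ ∫ t in a..c, φ t * (1 - ψ t) := by
      have e1 : (∫ t in c..b, φ t * ψ t) ≤ ∫ t in c..b, φ c * ψ t := by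
        refine intervalIntegral.integral_mono_ae_restrict hcb hφψ2 (hψ2.const_mul _)
          (steff_aeIoo fun t ht => ?_)
        have htab : t ∈ Ioo a b := ⟨lt_of_le_of_lt hac ht.1, ht.2⟩
        have h1 : φ t ≤ φ c :=
          hmono ⟨hac, hcb⟩ ⟨htab.1.le, htab.2.le⟩ ht.1.le
        exact mul_le_mul_of_nonneg_right h1 (hψ01 t htab).1
      have e2 : (∫ t in c..b, φ c * ψ t) = φ c * ∫ t in c..b, ψ t :=
        intervalIntegral.integral_const_mul _ _
      have e4 : φ c * (∫ t in a..c, (1 - ψ t)) = ∫ t in a..c, φ c * (1 - ψ t) :=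
        (intervalIntegral.integral_const_mul _ _).symm
      have e5 : (∫ t in a..c, φ c * (1 - ψ t)) ≤ ∫ t in a..c, φ t * (1 - ψ t) := by
        refine intervalIntegral.integral_mono_ae_restrict hac
          ((intervalIntegrable_const.sub hψ1).const_mul _) hφ1ψ1
          (steff_aeIoo fun t ht => ?_)
        have htab : t ∈ Ioo a b := ⟨ht.1, lt_of_lt_of_le ht.2 hcb⟩
        have h1 : φ c ≤ φ t :=
          hmono ⟨htab.1.le, htab.2.le⟩ ⟨hac, hcb⟩ ht.2.le
        have h2 : 0 ≤ 1 - ψ t := by linarith [(hψ01 t htab).2]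
        exact mul_le_mul_of_nonneg_right h1 h2
      calc (∫ t in c..b, φ t * ψ t) ≤ φ c * ∫ t in c..b, ψ t := by
              rw [← e2]; exact e1
        _ = ∫ t in a..c, φ c * (1 - ψ t) := by rw [← e3]; exact e4
        _ ≤ ∫ t in a..c, φ t * (1 - ψ t) := e5
    have split1 : (∫ t in a..b, φ t * ψ t)
        = (∫ t in a..c, φ t * ψ t) + ∫ t in c..b, φ t * ψ t :=
      (integral_add_adjacent_intervals hφψ1 hφψ2).symm
    have split2 : (∫ t in a..c, φ t)
        = (∫ t in a..c, φ t * ψ t) + ∫ t in a..c, φ t * (1 - ψ t) := by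
      rw [← intervalIntegral.integral_add hφψ1 hφ1ψ1]
      congr 1; funext t; ring
    linarith
end

section
/- Let φ and ψ be integrable functions on (a,b) with φ decreasing and 0 ≤ ψ ≤ 1, and let γ = ∫_a^b ψ(t) dt. Then ∫_a^b φ(t)ψ(t) dt ≥ ∫_{b-γ}^b φ(t) dt (the lower Steffensen inequality alone). -/
open MeasureTheory intervalIntegral Set

private lemma ae_Icc_of_Ioo {a b : ℝ} {f g : ℝ → ℝ} (h : ∀ t ∈ Ioo a b, f t ≤ g t) :
    f ≤ᵐ[volume.restrict (Icc a b)] g := by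
  rw [← restrict_Ioo_eq_restrict_Icc]
  exact (ae_restrict_mem measurableSet_Ioo).mono h

/-- Steffensen's inequality: if `φ` is decreasing and `0 ≤ ψ ≤ 1` are integrable on `(a,b)`,
and `γ = ∫_a^b ψ`, then `∫_{b-γ}^b φ ≤ ∫_a^b φψ ≤ ∫_a^{a+γ} φ`. -/
theorem steffensen_lower (a b : ℝ) (hab : a ≤ b) (φ ψ : ℝ → ℝ)
    (hφ : IntervalIntegrable φ volume a b)
    (hψ : IntervalIntegrable ψ volume a b)
    (hφψ : IntervalIntegrable (fun t => φ t * ψ t) volume a b)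
    (hmono : AntitoneOn φ (Icc a b))
    (hψ01 : ∀ t ∈ Ioo a b, ψ t ∈ Icc (0 : ℝ) 1)
    (γ : ℝ) (hγ : γ = ∫ t in a..b, ψ t) :
    (∫ t in a..b, φ t * ψ t) ≥ ∫ t in (b - γ)..b, φ t := by
  set c := b - γ with hc
  have hγ0 : 0 ≤ γ := by
    rw [hγ]
    exact integral_nonneg_of_ae_restrict hab (ae_Icc_of_Ioo fun t ht => (hψ01 t ht).1)
  have hγle : γ ≤ b - a := by
    have h1 : (∫ t in a..b, ψ t) ≤ ∫ t in a..b, (1 : ℝ) :=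
      integral_mono_ae_restrict hab hψ intervalIntegrable_const
        (ae_Icc_of_Ioo fun t ht => (hψ01 t ht).2)
    simpa [hγ] using h1
  have hac : a ≤ c := by simp [hc]; linarith
  have hcb : c ≤ b := by simp [hc]; linarith
  have hsub1 : uIcc a c ⊆ uIcc a b := by
    rw [uIcc_of_le hac, uIcc_of_le hab]; exact Icc_subset_Icc le_rfl hcb
  have hsub2 : uIcc c b ⊆ uIcc a b := by
    rw [uIcc_of_le hcb, uIcc_of_le hab]; exact Icc_subset_Icc hac le_rfl
  have hcmem : c ∈ Icc a b := ⟨hac, hcb⟩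
  -- integrabilities
  have hψ1 : IntervalIntegrable ψ volume a c := hψ.mono_set hsub1
  have hψ2 : IntervalIntegrable ψ volume c b := hψ.mono_set hsub2
  have hφ2 : IntervalIntegrable φ volume c b := hφ.mono_set hsub2
  have hφψ1 : IntervalIntegrable (fun t => φ t * ψ t) volume a c := hφψ.mono_set hsub1
  have hφψ2 : IntervalIntegrable (fun t => φ t * ψ t) volume c b := hφψ.mono_set hsub2
  -- Step 1 : φ(c) * ∫_a^c ψ ≤ ∫_a^c φψ
  have step1 : (∫ t in a..c, φ c * ψ t) ≤ ∫ t in a..c, φ t * ψ t := by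
    refine integral_mono_ae_restrict hac (hψ1.const_mul _) hφψ1 (ae_Icc_of_Ioo fun t ht => ?_)
    have htab : t ∈ Icc a b := ⟨le_of_lt ht.1, le_trans (le_of_lt ht.2) hcb⟩
    have h0ψ : 0 ≤ ψ t := (hψ01 t ⟨ht.1, lt_of_lt_of_le ht.2 hcb⟩).1
    exact mul_le_mul_of_nonneg_right (hmono htab hcmem (le_of_lt ht.2)) h0ψ
  -- Step 2 : ∫_c^b φ(1-ψ) ≤ φ(c) * ∫_c^b (1-ψ)
  have step2 : (∫ t in c..b, φ t * (1 - ψ t)) ≤ ∫ t in c..b, φ c * (1 - ψ t) := by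
    have hi1 : IntervalIntegrable (fun t => φ t * (1 - ψ t)) volume c b := by
      have : (fun t => φ t * (1 - ψ t)) = fun t => φ t - φ t * ψ t := by
        funext t; ring
      rw [this]; exact hφ2.sub hφψ2
    refine integral_mono_ae_restrict hcb hi1
      ((intervalIntegrable_const.sub hψ2).const_mul (φ c)) (ae_Icc_of_Ioo fun t ht => ?_)
    have htab : t ∈ Icc a b := ⟨le_trans hac (le_of_lt ht.1), le_of_lt ht.2⟩
    have hψt := hψ01 t ⟨lt_of_le_of_lt hac ht.1, ht.2⟩
    have h1ψ : 0 ≤ 1 - ψ t := by linarith [hψt.2]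
    exact mul_le_mul_of_nonneg_right (hmono hcmem htab (le_of_lt ht.1)) h1ψ
  -- equality of the two middle quantities
  have hsplitψ : (∫ t in a..c, ψ t) + ∫ t in c..b, ψ t = γ := by
    rw [hγ]; exact integral_add_adjacent_intervals hψ1 hψ2
  have key : (∫ t in c..b, φ c * (1 - ψ t)) = ∫ t in a..c, φ c * ψ t := by
    have h1 : (∫ t in c..b, φ c * (1 - ψ t)) = φ c * ((b - c) - ∫ t in c..b, ψ t) := by
      rw [intervalIntegral.integral_const_mul, integral_sub intervalIntegrable_const hψ2]
      simp
    have h2 : (∫ t in a..c, φ c * ψ t) = φ c * ∫ t in a..c, ψ t := intervalIntegral.integral_const_mul _ _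
    rw [h1, h2]
    congr 1
    have : b - c = γ := by simp [hc]
    linarith [hsplitψ]
  -- conclude
  have hsplit : (∫ t in a..b, φ t * ψ t) = (∫ t in a..c, φ t * ψ t) + ∫ t in c..b, φ t * ψ t :=
    (integral_add_adjacent_intervals hφψ1 hφψ2).symm
  have hφdecomp : (∫ t in c..b, φ t) =
      (∫ t in c..b, φ t * (1 - ψ t)) + ∫ t in c..b, φ t * ψ t := by
    rw [← integral_add (by
      have : (fun t => φ t * (1 - ψ t)) = fun t => φ t - φ t * ψ t := by funext t; ring
      rw [this]; exact hφ2.sub hφψ2) hφψ2]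
    congr 1; funext t; ring
  rw [ge_iff_le, hsplit, hφdecomp]
  have := le_trans step2 (le_of_eq key)
  linarith [step1, this]
end

section
/- Let φ and ψ be integrable on (a,b) with φ decreasing and 0 ≤ ψ ≤ 1, and γ = ∫_a^b ψ(t) dt. Then ∫_a^b φ(t)ψ(t) dt ≤ ∫_a^{a+γ} φ(t) dt (the upper Steffensen inequality alone). -/
open MeasureTheory intervalIntegral Set

/-- Steffensen's inequality: if `φ` is decreasing and `0 ≤ ψ ≤ 1` are integrable on `(a,b)`,
and `γ = ∫_a^b ψ`, then `∫_{b-γ}^b φ ≤ ∫_a^b φψ ≤ ∫_a^{a+γ} φ`. -/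
theorem steffensen_upper (a b : ℝ) (hab : a ≤ b) (φ ψ : ℝ → ℝ)
    (hφ : IntervalIntegrable φ volume a b)
    (hψ : IntervalIntegrable ψ volume a b)
    (hφψ : IntervalIntegrable (fun t => φ t * ψ t) volume a b)
    (hmono : AntitoneOn φ (Icc a b))
    (hψ01 : ∀ t ∈ Ioo a b, ψ t ∈ Icc (0 : ℝ) 1)
    (γ : ℝ) (hγ : γ = ∫ t in a..b, ψ t) :
    (∫ t in a..b, φ t * ψ t) ≤ ∫ t in a..(a + γ), φ t := by
  -- bounds on ψ a.e. on Icc a b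
  have hψ_ae : ∀ᵐ t ∂(volume.restrict (Icc a b)), ψ t ∈ Icc (0:ℝ) 1 := by
    rw [← Measure.restrict_congr_set Ioo_ae_eq_Icc]
    exact (ae_restrict_iff' measurableSet_Ioo).2 (Filter.Eventually.of_forall hψ01)
  have hγ0 : 0 ≤ γ := by
    rw [hγ]
    exact integral_nonneg_of_ae_restrict hab (hψ_ae.mono fun t ht => ht.1)
  have hγle : γ ≤ b - a := by
    have : (∫ t in a..b, ψ t) ≤ ∫ t in a..b, (1:ℝ) := by
      refine integral_mono_ae_restrict hab hψ intervalIntegrable_const ?_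
      exact hψ_ae.mono fun t ht => ht.2
    simpa [hγ] using this
  set c := a + γ with hc
  have hac : a ≤ c := by simp [hc, hγ0]
  have hcb : c ≤ b := by simp only [hc]; linarith
  have hcmem : c ∈ Icc a b := ⟨hac, hcb⟩
  -- integrability on subintervals
  have hsub1 : Set.uIcc a c ⊆ Set.uIcc a b := by
    rw [uIcc_of_le hac, uIcc_of_le hab]; exact Icc_subset_Icc le_rfl hcb
  have hsub2 : Set.uIcc c b ⊆ Set.uIcc a b := by
    rw [uIcc_of_le hcb, uIcc_of_le hab]; exact Icc_subset_Icc hac le_rfl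
  have hφ1 := hφ.mono_set hsub1
  have hψ1 := hψ.mono_set hsub1
  have hφψ1 := hφψ.mono_set hsub1
  have hφψ2 := hφψ.mono_set hsub2
  have hψ2 := hψ.mono_set hsub2
  -- split γ
  have hsplit : (∫ t in a..c, ψ t) + (∫ t in c..b, ψ t) = γ := by
    rw [hγ]; exact integral_add_adjacent_intervals hψ1 hψ2
  -- First key inequality: ∫_c^b φψ ≤ φ c * ∫_c^b ψ
  have key1 : (∫ t in c..b, φ t * ψ t) ≤ φ c * ∫ t in c..b, ψ t := by
    rw [← intervalIntegral.integral_const_mul]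
    refine integral_mono_ae_restrict hcb hφψ2 (hψ2.const_mul _) ?_
    rw [← Measure.restrict_congr_set Ioo_ae_eq_Icc]
    refine (ae_restrict_iff' measurableSet_Ioo).2 (Filter.Eventually.of_forall fun t ht => ?_)
    have htb : t ∈ Ioo a b := ⟨lt_of_le_of_lt hac ht.1, ht.2⟩
    have hψt := hψ01 t htb
    have hφt : φ t ≤ φ c := hmono hcmem ⟨le_of_lt htb.1, le_of_lt htb.2⟩ (le_of_lt ht.1)
    exact mul_le_mul_of_nonneg_right hφt hψt.1
  -- Second key inequality: φ c * ∫_a^c (1 - ψ) ≤ ∫_a^c (φ - φψ)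
  have key2 : φ c * ∫ t in a..c, (1 - ψ t) ≤ ∫ t in a..c, (φ t - φ t * ψ t) := by
    rw [← intervalIntegral.integral_const_mul]
    refine integral_mono_ae_restrict hac ((intervalIntegrable_const.sub hψ1).const_mul _) (hφ1.sub hφψ1) ?_
    rw [← Measure.restrict_congr_set Ioo_ae_eq_Icc]
    refine (ae_restrict_iff' measurableSet_Ioo).2 (Filter.Eventually.of_forall fun t ht => ?_)
    have htb : t ∈ Ioo a b := ⟨ht.1, lt_of_lt_of_le ht.2 hcb⟩
    have hψt := hψ01 t htb
    have hφt : φ c ≤ φ t := hmono ⟨le_of_lt htb.1, le_of_lt htb.2⟩ hcmem (le_of_lt ht.2)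
    have h1 : 0 ≤ 1 - ψ t := by linarith [hψt.2]
    have h2 : φ c * (1 - ψ t) ≤ φ t * (1 - ψ t) := mul_le_mul_of_nonneg_right hφt h1
    show φ c * (1 - ψ t) ≤ φ t - φ t * ψ t
    nlinarith [h2]
  -- rewrite key2's sides
  have e1 : (∫ t in a..c, (1 - ψ t)) = (c - a) - ∫ t in a..c, ψ t := by
    rw [intervalIntegral.integral_sub intervalIntegrable_const hψ1]
    simp
  have e2 : (∫ t in a..c, (φ t - φ t * ψ t)) = (∫ t in a..c, φ t) - ∫ t in a..c, φ t * ψ t := by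
    rw [intervalIntegral.integral_sub hφ1 hφψ1]
  have hca : c - a = γ := by simp [hc]
  have key2' : φ c * ∫ t in c..b, ψ t ≤ (∫ t in a..c, φ t) - ∫ t in a..c, φ t * ψ t := by
    have : (∫ t in c..b, ψ t) = (c - a) - ∫ t in a..c, ψ t := by
      rw [hca]; linarith [hsplit]
    rw [this]
    calc φ c * ((c - a) - ∫ t in a..c, ψ t)
        = φ c * ∫ t in a..c, (1 - ψ t) := by rw [e1]
      _ ≤ ∫ t in a..c, (φ t - φ t * ψ t) := key2
      _ = _ := e2
  have hsplitφψ : (∫ t in a..c, φ t * ψ t) + (∫ t in c..b, φ t * ψ t)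
      = ∫ t in a..b, φ t * ψ t := integral_add_adjacent_intervals hφψ1 hφψ2
  linarith [key1, key2', hsplitφψ]
end
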